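/- For any ε ∈ [0, 1/2), any p ∈ [0, 1−2ε), and any q ∈ [p+ε, 1−ε), it holds that d(p/(1−ε), q/(1−ε)) ≥ (1/(4(1−ε))) · d(p, q+ε). -/

import Mathlib

open MeasureTheory ProbabilityTheory Filter Real
open scoped ENNReal

noncomputable section

/-- KL divergence between Bernoulli distributions of means `p` and `q` (real-valued version,
with the convention `0 * log 0 = 0`, which holds definitionally since `Real.log 0 = 0`). -/
def klBern (p q : ℝ) : ℝ :=
  p * Real.log (p / q) + (1 - p) * Real.log ((1 - p) / (1 - q))

lemma klBern_self (x : ℝ) : klBern x x = 0 := by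
  unfold klBern
  rcases eq_or_ne x 0 with h | h
  · simp [h]
  rcases eq_or_ne x 1 with h1 | h1
  · simp [h1]
  · rw [div_self h, div_self (sub_ne_zero_of_ne (Ne.symm h1))]
    simp

lemma klBern_eq (P t : ℝ) (hP0 : 0 ≤ P) (hP1 : P < 1) (ht0 : 0 < t) (ht1 : t < 1) :
    klBern P t = (P * Real.log P + (1 - P) * Real.log (1 - P))
      - (P * Real.log t + (1 - P) * Real.log (1 - t)) := by
  unfold klBern
  rcases eq_or_lt_of_le hP0 with h | h
  · rw [← h]
    have h1t : (1:ℝ) - t ≠ 0 := by linarith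
    simp [Real.log_div one_ne_zero h1t]
  · rw [Real.log_div (ne_of_gt h) (ne_of_gt ht0),
        Real.log_div (by linarith : (1:ℝ) - P ≠ 0) (by linarith : (1:ℝ) - t ≠ 0)]
    ring

lemma hasDerivAt_klBern_comp (P : ℝ) (hP0 : 0 ≤ P) (hP1 : P < 1)
    {f : ℝ → ℝ} {f' u : ℝ} (hf : HasDerivAt f f' u) (h0 : 0 < f u) (h1 : f u < 1) :
    HasDerivAt (fun x => klBern P (f x))
      (f' * ((f u - P) / (f u * (1 - f u)))) u := by
  have hlog1 : HasDerivAt (fun x => Real.log (f x)) (f' / f u) u := hf.log (ne_of_gt h0)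
  have h1f : (1:ℝ) - f u ≠ 0 := by intro hh; linarith [hh]
  have hf0' : f u ≠ 0 := ne_of_gt h0
  have hsub : HasDerivAt (fun x => 1 - f x) (0 - f') u := (hasDerivAt_const u 1).sub hf
  have hlog2 : HasDerivAt (fun x => Real.log (1 - f x)) ((0 - f') / (1 - f u)) u :=
    hsub.log h1f
  have H : HasDerivAt (fun x => (P * Real.log P + (1 - P) * Real.log (1 - P))
      - (P * Real.log (f x) + (1 - P) * Real.log (1 - f x)))
      (0 - (P * (f' / f u) + (1 - P) * ((0 - f') / (1 - f u)))) u :=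
    (hasDerivAt_const u _).sub ((hlog1.const_mul P).add (hlog2.const_mul (1 - P)))
  have hev : (fun x => klBern P (f x)) =ᶠ[nhds u]
      (fun x => (P * Real.log P + (1 - P) * Real.log (1 - P))
        - (P * Real.log (f x) + (1 - P) * Real.log (1 - f x))) := by
    have hmem : f ⁻¹' (Set.Ioo (0:ℝ) 1) ∈ nhds u :=
      hf.continuousAt (isOpen_Ioo.mem_nhds ⟨h0, h1⟩)
    filter_upwards [hmem] with x hx
    exact klBern_eq P (f x) hP0 hP1 hx.1 hx.2
  have H' := H.congr_of_eventuallyEq hev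
  refine H'.congr_deriv ?_
  field_simp
  ring

lemma continuousOn_klBern_comp (P : ℝ) (hP0 : 0 ≤ P) (hP1 : P < 1)
    {f : ℝ → ℝ} {s : Set ℝ} (hf : ContinuousOn f s)
    (hf0 : ∀ u ∈ s, 0 < f u ∨ P = 0) (hf1 : ∀ u ∈ s, f u < 1) :
    ContinuousOn (fun u => klBern P (f u)) s := by
  rcases eq_or_lt_of_le hP0 with hP | hP
  · have heq : ∀ u ∈ s, klBern P (f u) = - Real.log (1 - f u) := by
      intro u hu
      simp [klBern, ← hP, Real.log_inv]
    apply ContinuousOn.congr _ heq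
    refine ((continuousOn_const.sub hf).log (fun u hu => ?_)).neg
    have := hf1 u hu
    exact (by intro hh; linarith [hh] : (1:ℝ) - f u ≠ 0)
  · have hpos : ∀ u ∈ s, 0 < f u := fun u hu => (hf0 u hu).resolve_right (by positivity)
    unfold klBern
    apply ContinuousOn.add
    · exact continuousOn_const.mul
        ((continuousOn_const.div hf (fun u hu => ne_of_gt (hpos u hu))).log
          (fun u hu => ne_of_gt (div_pos hP (hpos u hu))))
    · refine continuousOn_const.mul
        ((continuousOn_const.div (continuousOn_const.sub hf)
          (fun u hu => ?_)).log (fun u hu => ?_))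
      · have := hf1 u hu
        exact (by intro hh; linarith [hh] : (1:ℝ) - f u ≠ 0)
      · have := hf1 u hu
        exact ne_of_gt (div_pos (show (0:ℝ) < 1 - P by linarith)
          (show (0:ℝ) < 1 - f u by linarith))

lemma key_poly (ε c s δ : ℝ) (hc : c = 1 - ε) (hε : 0 ≤ ε) (hc2 : 1/2 ≤ c)
    (hδ0 : 0 ≤ δ) (hδε : δ ≤ ε) (hs : 0 ≤ s) :
    s * (c - s) ≤ c * ((s + δ) * (1 - (s + δ))) := by
  subst hc
  have hc0 : (0:ℝ) ≤ 1 - ε := by linarith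
  rcases le_or_gt (1 - ε) (2*s + δ) with h | h
  · have h1 : 0 ≤ ε * (s - (1 - ε))^2 := mul_nonneg hε (sq_nonneg _)
    have h2 : 0 ≤ (1 - ε) * (ε - δ) * (2*s + δ - (1 - ε)) :=
      mul_nonneg (mul_nonneg hc0 (by linarith)) (by linarith)
    nlinarith [h1, h2]
  · have h1 : 0 ≤ (1 - ε) * δ * (1 - 2*s - δ) :=
      mul_nonneg (mul_nonneg hc0 hδ0) (by linarith)
    have h2 : 0 ≤ ε * s^2 := mul_nonneg hε (sq_nonneg _)
    nlinarith [h1, h2]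

set_option maxHeartbeats 1000000 in
/-- **Lemma (mod-KL comparison).** For any `ε ∈ [0, 1/2)`, any `p ∈ [0, 1 − 2ε)` and any
`q ∈ [p + ε, 1 − ε)`, one has `d(p/(1−ε), q/(1−ε)) ≥ d(p, q+ε) / (4(1−ε))`. -/
theorem klBern_scaled_ge (ε p q : ℝ) (hε0 : 0 ≤ ε) (hε : ε < 1 / 2)
    (hp0 : 0 ≤ p) (hp1 : p < 1 - 2 * ε) (hq1 : p + ε ≤ q) (hq2 : q < 1 - ε) :
    (1 / (4 * (1 - ε))) * klBern p (q + ε) ≤ klBern (p / (1 - ε)) (q / (1 - ε)) := by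
  have hc0 : (0:ℝ) < 1 - ε := by linarith
  by_cases hdeg : q + ε - p = 0
  · have hε' : ε = 0 := by linarith
    have hqp : q = p := by linarith
    rw [hε', hqp]
    norm_num [klBern_self]
  -- main case
  have hb : 0 < q + ε - p := lt_of_le_of_ne (by linarith) (Ne.symm hdeg)
  have ha : 0 < q - p := by
    rcases lt_or_eq_of_le (by linarith : (0:ℝ) ≤ q - p) with h | h
    · exact h
    · exfalso; have hε' : ε = 0 := by linarith
      apply hdeg; linarith
  have haε : ε ≤ q - p := by linarith
  have hpc : p < 1 - ε := by linarith
  have hPc0 : 0 ≤ p / (1 - ε) := div_nonneg hp0 hc0.le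
  have hPc1 : p / (1 - ε) < 1 := (div_lt_one hc0).2 hpc
  set F : ℝ → ℝ := fun u =>
    klBern (p / (1 - ε)) ((p + u * (q - p)) / (1 - ε))
      - (1 / (4 * (1 - ε))) * klBern p (p + u * (q + ε - p)) with hF
  have hf1cont : ContinuousOn (fun u : ℝ => (p + u * (q - p)) / (1 - ε)) (Set.Icc 0 1) :=
    (continuousOn_const.add (continuousOn_id.mul continuousOn_const)).div_const _
  have hf2cont : ContinuousOn (fun u : ℝ => p + u * (q + ε - p)) (Set.Icc 0 1) :=
    continuousOn_const.add (continuousOn_id.mul continuousOn_const)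
  have hcont : ContinuousOn F (Set.Icc 0 1) := by
    apply ContinuousOn.sub
    · refine continuousOn_klBern_comp _ hPc0 hPc1 hf1cont (fun u hu => ?_) (fun u hu => ?_)
      · rcases eq_or_lt_of_le hp0 with h | h
        · right; rw [← h]; simp
        · left
          exact div_pos (by nlinarith [hu.1]) hc0
      · rw [div_lt_one hc0]
        nlinarith [hu.2]
    · exact continuousOn_const.mul
        (continuousOn_klBern_comp _ hp0 (by linarith) hf2cont
          (fun u hu => by
            rcases eq_or_lt_of_le hp0 with h | h
            · right; exact h.symm
            · left; nlinarith [hu.1])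
          (fun u hu => by nlinarith [hu.2]))
  have hderiv : ∀ u ∈ Set.Ioo (0:ℝ) 1,
      HasDerivAt F
        (((0 + 1 * (q - p)) / (1 - ε)) *
            (((p + u * (q - p)) / (1 - ε) - p / (1 - ε)) /
              (((p + u * (q - p)) / (1 - ε)) * (1 - (p + u * (q - p)) / (1 - ε))))
          - (1 / (4 * (1 - ε))) *
            ((0 + 1 * (q + ε - p)) *
              ((p + u * (q + ε - p) - p) /
                ((p + u * (q + ε - p)) * (1 - (p + u * (q + ε - p))))))) u := by
    intro u hu
    obtain ⟨hu0, hu1⟩ := hu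
    have hf1d : HasDerivAt (fun x : ℝ => (p + x * (q - p)) / (1 - ε))
        ((0 + 1 * (q - p)) / (1 - ε)) u :=
      ((hasDerivAt_const u p).add ((hasDerivAt_id u).mul_const (q - p))).div_const _
    have hf2d : HasDerivAt (fun x : ℝ => p + x * (q + ε - p)) (0 + 1 * (q + ε - p)) u :=
      (hasDerivAt_const u p).add ((hasDerivAt_id u).mul_const (q + ε - p))
    have h1 := hasDerivAt_klBern_comp (p / (1 - ε)) hPc0 hPc1 hf1d
      (div_pos (by nlinarith) hc0) (by rw [div_lt_one hc0]; nlinarith)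
    have h2 := hasDerivAt_klBern_comp p hp0 (by linarith) hf2d
      (by nlinarith) (by nlinarith)
    exact h1.sub (h2.const_mul (1 / (4 * (1 - ε))))
  have hderiv_nonneg : ∀ u ∈ Set.Ioo (0:ℝ) 1,
      0 ≤ (((0 + 1 * (q - p)) / (1 - ε)) *
            (((p + u * (q - p)) / (1 - ε) - p / (1 - ε)) /
              (((p + u * (q - p)) / (1 - ε)) * (1 - (p + u * (q - p)) / (1 - ε))))
          - (1 / (4 * (1 - ε))) *
            ((0 + 1 * (q + ε - p)) *
              ((p + u * (q + ε - p) - p) /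
                ((p + u * (q + ε - p)) * (1 - (p + u * (q + ε - p))))))) := by
    intro u hu
    obtain ⟨hu0, hu1⟩ := hu
    have hs0 : 0 < p + u * (q - p) := by nlinarith
    have hsc : p + u * (q - p) < 1 - ε := by nlinarith
    have ht0 : 0 < p + u * (q + ε - p) := by nlinarith
    have ht1 : p + u * (q + ε - p) < 1 := by nlinarith
    have e1 : ((0 + 1 * (q - p)) / (1 - ε)) *
            (((p + u * (q - p)) / (1 - ε) - p / (1 - ε)) /
              (((p + u * (q - p)) / (1 - ε)) * (1 - (p + u * (q - p)) / (1 - ε))))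
        = u * (q - p) ^ 2 / ((p + u * (q - p)) * ((1 - ε) - (p + u * (q - p)))) := by
      have n1 : (1:ℝ) - ε ≠ 0 := ne_of_gt hc0
      have n2 : p + u * (q - p) ≠ 0 := ne_of_gt hs0
      have n3 : 1 - ε - (p + u * (q - p)) ≠ 0 := by linarith
      field_simp
      ring
    have e2 : (0 + 1 * (q + ε - p)) *
              ((p + u * (q + ε - p) - p) /
                ((p + u * (q + ε - p)) * (1 - (p + u * (q + ε - p)))))
        = u * (q + ε - p) ^ 2 / ((p + u * (q + ε - p)) * (1 - (p + u * (q + ε - p)))) := by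
      have n4 : p + u * (q + ε - p) ≠ 0 := ne_of_gt ht0
      have n5 : 1 - (p + u * (q + ε - p)) ≠ 0 := by linarith
      field_simp
      ring
    rw [e1, e2, sub_nonneg]
    have hkey : (p + u * (q - p)) * ((1 - ε) - (p + u * (q - p)))
        ≤ (1 - ε) * ((p + u * (q + ε - p)) * (1 - (p + u * (q + ε - p)))) := by
      have := key_poly ε (1 - ε) (p + u * (q - p)) (u * ε) rfl hε0 (by linarith)
        (by positivity) (by nlinarith) (by positivity)
      convert this using 3 <;> ring
    have hb2 : (q + ε - p) ^ 2 ≤ 4 * (q - p) ^ 2 := by nlinarith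
    have hrw : 1 / (4 * (1 - ε)) *
        (u * (q + ε - p) ^ 2 / ((p + u * (q + ε - p)) * (1 - (p + u * (q + ε - p)))))
        = u * (q + ε - p) ^ 2 /
          (4 * (1 - ε) * ((p + u * (q + ε - p)) * (1 - (p + u * (q + ε - p))))) := by
      have n1 : (1:ℝ) - ε ≠ 0 := ne_of_gt hc0
      have n4 : p + u * (q + ε - p) ≠ 0 := ne_of_gt ht0
      have n5 : 1 - (p + u * (q + ε - p)) ≠ 0 := by linarith
      field_simp
    have d1 : 0 < 4 * (1 - ε) * ((p + u * (q + ε - p)) * (1 - (p + u * (q + ε - p)))) :=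
      mul_pos (by linarith) (mul_pos ht0 (by linarith))
    have d2 : 0 < (p + u * (q - p)) * (1 - ε - (p + u * (q - p))) :=
      mul_pos hs0 (by linarith)
    rw [hrw, div_le_div_iff₀ d1 d2]
    have hn1 : (0:ℝ) ≤ u * (q + ε - p)^2 := mul_nonneg hu0.le (sq_nonneg _)
    have hn2 : (0:ℝ) ≤ u * ((p + u * (q - p)) * (1 - ε - (p + u * (q - p)))) :=
      mul_nonneg hu0.le d2.le
    nlinarith [mul_le_mul_of_nonneg_left hkey hn1,
      mul_le_mul_of_nonneg_right hb2 hn2]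
  have hmono : MonotoneOn F (Set.Icc 0 1) := by
    apply monotoneOn_of_deriv_nonneg (convex_Icc 0 1) hcont
    · intro u hu
      rw [interior_Icc] at hu
      exact ((hderiv u hu).differentiableAt).differentiableWithinAt
    · intro u hu
      rw [interior_Icc] at hu
      rw [(hderiv u hu).deriv]
      exact hderiv_nonneg u hu
  have h01 : F 0 ≤ F 1 :=
    hmono (Set.mem_Icc.2 ⟨le_refl 0, zero_le_one⟩) (Set.mem_Icc.2 ⟨zero_le_one, le_refl 1⟩)
      zero_le_one
  have hF0 : F 0 = 0 := by
    simp only [hF, zero_mul, add_zero]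
    rw [klBern_self, klBern_self]
    ring
  have hF1 : F 1 = klBern (p / (1 - ε)) (q / (1 - ε))
      - (1 / (4 * (1 - ε))) * klBern p (q + ε) := by
    simp only [hF, one_mul]
    ring_nf
  rw [hF0, hF1] at h01
  linarith
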